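/- There exists a constant C > 0 such that the following holds: for all δ > 0, every real K ≥ 1, every function u : ℤ³ → ℂ with u(0) = 0 and |u(α)| ≤ δ/|α|² for all α with |α| ≥ K, and every k ∈ ℤ³ with |k| ≥ 2K, one has Σ_{α ∈ ℤ³, |α| ≤ 2|k|, K ≤ |k−α| ≤ |k|/2} |α|·|u(α)|·|u(k−α)| ≤ C·δ². -/

import Mathlib

/-- The Euclidean norm of a lattice point in `ℤ³`. -/
noncomputable def znorm (a : Fin 3 → ℤ) : ℝ := Real.sqrt (∑ i, ((a i : ℝ)) ^ 2)

lemma znorm_nonneg (a : Fin 3 → ℤ) : 0 ≤ znorm a := Real.sqrt_nonneg _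

lemma znorm_eq_norm (a : Fin 3 → ℤ) :
    znorm a = ‖(WithLp.equiv 2 (Fin 3 → ℝ)).symm (fun i => (a i : ℝ))‖ := by
  rw [EuclideanSpace.norm_eq]
  unfold znorm
  congr 1
  refine Finset.sum_congr rfl fun i _ => ?_
  rw [Real.norm_eq_abs, sq_abs]
  rfl

lemma znorm_triangle (k a : Fin 3 → ℤ) : znorm k ≤ znorm (k - a) + znorm a := by
  rw [znorm_eq_norm, znorm_eq_norm, znorm_eq_norm]
  have h : (WithLp.equiv 2 (Fin 3 → ℝ)).symm (fun i => ((k i : ℝ))) =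
      (WithLp.equiv 2 (Fin 3 → ℝ)).symm (fun i => (((k - a) i : ℝ))) +
      (WithLp.equiv 2 (Fin 3 → ℝ)).symm (fun i => ((a i : ℝ))) := by
    rw [WithLp.equiv_symm_apply, ← WithLp.toLp_add]
    congr 1
    funext i
    simp only [Pi.add_apply, Pi.sub_apply]
    push_cast
    ring
  rw [h]
  exact norm_add_le _ _

lemma coord_le_znorm (a : Fin 3 → ℤ) (i : Fin 3) : |(a i : ℝ)| ≤ znorm a := by
  have h1 : ((a i : ℝ)) ^ 2 ≤ ∑ j, ((a j : ℝ)) ^ 2 :=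
    Finset.single_le_sum (f := fun j => ((a j : ℝ)) ^ 2) (fun j _ => sq_nonneg _)
      (Finset.mem_univ i)
  calc |(a i : ℝ)| = Real.sqrt (((a i : ℝ)) ^ 2) := (Real.sqrt_sq_eq_abs _).symm
    _ ≤ znorm a := Real.sqrt_le_sqrt h1

lemma znorm_zero : znorm 0 = 0 := by simp [znorm]

/-- sup norm -/
def mfun (a : Fin 3 → ℤ) : ℤ := max |a 0| (max |a 1| |a 2|)

lemma abs_le_mfun (a : Fin 3 → ℤ) (i : Fin 3) : |a i| ≤ mfun a := by
  fin_cases i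
  · exact le_max_left _ _
  · exact le_trans (le_max_left _ _) (le_max_right _ _)
  · exact le_trans (le_max_right _ _) (le_max_right _ _)

lemma mfun_le_znorm (a : Fin 3 → ℤ) : (mfun a : ℝ) ≤ znorm a := by
  have h : ∀ i, |((a i : ℤ) : ℝ)| ≤ znorm a := coord_le_znorm a
  have h0 := h 0; have h1 := h 1; have h2 := h 2
  unfold mfun
  push_cast
  exact max_le h0 (max_le h1 h2)

lemma one_le_mfun (a : Fin 3 → ℤ) (h : 1 ≤ znorm a) : 1 ≤ mfun a := by
  by_contra hc
  push_neg at hc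
  have hm : mfun a ≤ 0 := by omega
  have hz : a = 0 := by
    funext i
    have := (abs_le_mfun a i).trans hm
    show a i = 0
    exact abs_eq_zero.mp (le_antisymm this (abs_nonneg _))
  rw [hz, znorm_zero] at h
  linarith

/-- box -/
noncomputable def zbox (m : ℤ) : Finset (Fin 3 → ℤ) := Fintype.piFinset fun _ => Finset.Icc (-m) m

lemma mem_zbox {m : ℤ} {a : Fin 3 → ℤ} : a ∈ zbox m ↔ ∀ i, |a i| ≤ m := by
  simp [zbox, Fintype.mem_piFinset, abs_le, Finset.mem_Icc]

lemma card_zbox (m : ℤ) (hm : 0 ≤ m) : ((zbox m).card : ℝ) = (2 * (m : ℝ) + 1) ^ 3 := by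
  have : (Finset.Icc (-m) m).card = (2 * m + 1).toNat := by
    rw [Int.card_Icc]; congr 1; ring
  rw [zbox, Fintype.card_piFinset]
  simp only [this, Finset.prod_const, Finset.card_univ, Fintype.card_fin]
  have h3 : (((2 * m + 1).toNat : ℕ) : ℝ) = 2 * (m : ℝ) + 1 := by
    exact_mod_cast Int.toNat_of_nonneg (by omega : (0:ℤ) ≤ 2 * m + 1)
  rw [Nat.cast_pow, h3]

lemma fiber_card (m : ℤ) (hm : 1 ≤ m) (t : Finset (Fin 3 → ℤ))
    (ht : ∀ β ∈ t, mfun β = m) : (t.card : ℝ) ≤ 26 * (m : ℝ) ^ 2 := by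
  have hsub : t ⊆ zbox m \ zbox (m - 1) := by
    intro β hβ
    have hmf := ht β hβ
    rw [Finset.mem_sdiff, mem_zbox, mem_zbox]
    constructor
    · intro i; have := abs_le_mfun β i; omega
    · intro hall
      have h0 := hall 0; have h1 := hall 1; have h2 := hall 2
      have : mfun β ≤ m - 1 := max_le h0 (max_le h1 h2)
      omega
  have hboxsub : zbox (m - 1) ⊆ zbox m := by
    intro β hβ; rw [mem_zbox] at *; intro i; have := hβ i; omega
  have hc1 : ((zbox m \ zbox (m - 1)).card : ℝ)
      = ((zbox m).card : ℝ) - ((zbox (m - 1)).card : ℝ) := by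
    rw [Finset.card_sdiff_of_subset hboxsub, Nat.cast_sub (Finset.card_le_card hboxsub)]
  have := Finset.card_le_card hsub
  have hle : (t.card : ℝ) ≤ ((zbox m \ zbox (m - 1)).card : ℝ) := by exact_mod_cast this
  rw [hc1, card_zbox m (by omega), card_zbox (m - 1) (by omega)] at hle
  have hm' : (1 : ℝ) ≤ (m : ℝ) := by exact_mod_cast hm
  push_cast at hle
  nlinarith [sq_nonneg ((m : ℝ) - 1)]

lemma shell_sum (R : ℝ) (hR : 0 ≤ R) (t : Finset (Fin 3 → ℤ))
    (ht : ∀ β ∈ t, 1 ≤ znorm β ∧ znorm β ≤ R) :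
    ∑ β ∈ t, 1 / znorm β ^ 2 ≤ 26 * R := by
  set N := ⌊R⌋ with hN
  have hmaps : ∀ β ∈ t, mfun β ∈ Finset.Icc 1 N := by
    intro β hβ
    rw [Finset.mem_Icc]
    refine ⟨one_le_mfun β (ht β hβ).1, Int.le_floor.2 ?_⟩
    exact (mfun_le_znorm β).trans (ht β hβ).2
  rw [← Finset.sum_fiberwise_of_maps_to hmaps (fun β => 1 / znorm β ^ 2)]
  have hinner : ∀ m ∈ Finset.Icc 1 N,
      ∑ β ∈ t.filter fun β => mfun β = m, 1 / znorm β ^ 2 ≤ 26 := by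
    intro m hm
    rw [Finset.mem_Icc] at hm
    have hm1 : (1 : ℝ) ≤ (m : ℝ) := by exact_mod_cast hm.1
    have hterm : ∀ β ∈ t.filter fun β => mfun β = m,
        1 / znorm β ^ 2 ≤ 1 / (m : ℝ) ^ 2 := by
      intro β hβ
      rw [Finset.mem_filter] at hβ
      have h1 : (m : ℝ) ≤ znorm β := hβ.2 ▸ mfun_le_znorm β
      apply one_div_le_one_div_of_le (by positivity)
      exact pow_le_pow_left₀ (by linarith) h1 2
    calc ∑ β ∈ t.filter fun β => mfun β = m, 1 / znorm β ^ 2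
        ≤ ∑ _β ∈ t.filter fun β => mfun β = m, 1 / (m : ℝ) ^ 2 :=
          Finset.sum_le_sum hterm
      _ = ((t.filter fun β => mfun β = m).card : ℝ) * (1 / (m : ℝ) ^ 2) := by
          rw [Finset.sum_const, nsmul_eq_mul]
      _ ≤ 26 * (m : ℝ) ^ 2 * (1 / (m : ℝ) ^ 2) := by
          apply mul_le_mul_of_nonneg_right _ (by positivity)
          exact fiber_card m hm.1 _ fun β hβ => (Finset.mem_filter.1 hβ).2
      _ = 26 := by field_simp
  calc ∑ m ∈ Finset.Icc 1 N, ∑ β ∈ t.filter fun β => mfun β = m, 1 / znorm β ^ 2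
      ≤ ∑ _m ∈ Finset.Icc 1 N, (26 : ℝ) := Finset.sum_le_sum hinner
    _ = ((Finset.Icc 1 N).card : ℝ) * 26 := by rw [Finset.sum_const, nsmul_eq_mul]
    _ ≤ R * 26 := by
        apply mul_le_mul_of_nonneg_right _ (by norm_num)
        rw [Int.card_Icc]
        rcases le_or_gt 0 N with h | h
        · have : (N + 1 - 1).toNat = N.toNat := by omega
          rw [this]
          have : ((N.toNat : ℤ) : ℝ) ≤ R := by
            rw [Int.toNat_of_nonneg h]; exact Int.floor_le R
          exact_mod_cast this
        · have : (N + 1 - 1).toNat = 0 := by omega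
          rw [this]; simpa using hR
    _ = 26 * R := by ring

/-- There is a constant `C > 0` such that: for all `δ > 0`, `K ≥ 1`, every `u : ℤ³ → ℂ` with
`u 0 = 0` and `|u α| ≤ δ/|α|²` for `|α| ≥ K`, and every `k` with `|k| ≥ 2K`,
`∑_{|α| ≤ 2|k|, K ≤ |k−α| ≤ |k|/2} |α|·|u α|·|u (k−α)| ≤ C·δ²`. -/
theorem middle_cofrequency_piece_bound :
    ∃ C : ℝ, 0 < C ∧
      ∀ (δ K : ℝ), 0 < δ → 1 ≤ K →
        ∀ u : (Fin 3 → ℤ) → ℂ, u 0 = 0 →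
          (∀ α : Fin 3 → ℤ, K ≤ znorm α → ‖u α‖ ≤ δ / znorm α ^ 2) →
          ∀ k : Fin 3 → ℤ, 2 * K ≤ znorm k →
            (∑' α : {a : Fin 3 → ℤ //
                znorm a ≤ 2 * znorm k ∧ K ≤ znorm (k - a) ∧ znorm (k - a) ≤ znorm k / 2},
              znorm α.1 * ‖u α.1‖ * ‖u (k - α.1)‖)
              ≤ C * δ ^ 2 := by
  refine ⟨26, by norm_num, fun δ K hδ hK u hu0 hu k hk => ?_⟩
  have hk0 : 0 < znorm k := by linarith
  apply tsum_le_of_sum_le' (by positivity)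
  intro s
  -- per-term bound
  have hterm : ∀ x ∈ s, znorm x.1 * ‖u x.1‖ * ‖u (k - x.1)‖
      ≤ (2 * δ ^ 2 / znorm k) * (1 / znorm (k - x.1) ^ 2) := by
    intro x _
    obtain ⟨h1, h2, h3⟩ := x.2
    have hb0 : 0 < znorm (k - x.1) := by linarith
    have hα : znorm k / 2 ≤ znorm x.1 := by
      have := znorm_triangle k x.1
      linarith
    have hα0 : 0 < znorm x.1 := by linarith
    have hb1 : ‖u x.1‖ ≤ δ / znorm x.1 ^ 2 := hu x.1 (by linarith)
    have hb2 : ‖u (k - x.1)‖ ≤ δ / znorm (k - x.1) ^ 2 := hu _ h2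
    have step1 : znorm x.1 * ‖u x.1‖ * ‖u (k - x.1)‖
        ≤ znorm x.1 * (δ / znorm x.1 ^ 2) * (δ / znorm (k - x.1) ^ 2) := by
      apply mul_le_mul _ hb2 (norm_nonneg _) (by positivity)
      exact mul_le_mul_of_nonneg_left hb1 (le_of_lt hα0)
    refine step1.trans ?_
    have e1 : znorm x.1 * (δ / znorm x.1 ^ 2) * (δ / znorm (k - x.1) ^ 2)
        = (δ / znorm x.1) * (δ / znorm (k - x.1) ^ 2) := by
      field_simp
    rw [e1]
    have e2 : δ / znorm x.1 ≤ 2 * δ / znorm k := by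
      rw [div_le_div_iff₀ hα0 hk0]
      nlinarith
    calc (δ / znorm x.1) * (δ / znorm (k - x.1) ^ 2)
        ≤ (2 * δ / znorm k) * (δ / znorm (k - x.1) ^ 2) :=
          mul_le_mul_of_nonneg_right e2 (by positivity)
      _ = (2 * δ ^ 2 / znorm k) * (1 / znorm (k - x.1) ^ 2) := by
          field_simp
  have hsum1 := Finset.sum_le_sum hterm
  refine hsum1.trans ?_
  rw [← Finset.mul_sum]
  -- now bound the sum of 1 / znorm (k - x.1)^2
  have hinj : ∀ x ∈ s, ∀ y ∈ s, k - x.1 = k - y.1 → x = y := by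
    intro x _ y _ h
    exact Subtype.ext (by have := sub_right_injective h; exact this)
  have himg : ∑ x ∈ s, 1 / znorm (k - x.1) ^ 2
      = ∑ β ∈ s.image (fun x => k - x.1), 1 / znorm β ^ 2 :=
    (Finset.sum_image (f := fun β => 1 / znorm β ^ 2) hinj).symm
  have hshell : ∑ β ∈ s.image (fun x => k - x.1), 1 / znorm β ^ 2
      ≤ 26 * (znorm k / 2) := by
    apply shell_sum _ (by linarith)
    intro β hβ
    rw [Finset.mem_image] at hβ
    obtain ⟨x, _, rfl⟩ := hβ
    exact ⟨le_trans hK x.2.2.1, x.2.2.2⟩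
  have : ∑ x ∈ s, 1 / znorm (k - x.1) ^ 2 ≤ 26 * (znorm k / 2) := himg ▸ hshell
  calc (2 * δ ^ 2 / znorm k) * ∑ x ∈ s, 1 / znorm (k - x.1) ^ 2
      ≤ (2 * δ ^ 2 / znorm k) * (26 * (znorm k / 2)) :=
        mul_le_mul_of_nonneg_left this (by positivity)
    _ = 26 * δ ^ 2 := by field_simp
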